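/- Let X, Y, H, V be vector fields on a manifold with [X,Y] = −X, [X,H] = −E²V, [X,V] = −H, where E is a function with X(E) = 0, and E > 0 on the region considered. Then for each of the time-dependent vector fields Z ∈ {X, tX + Y, e^{Et}(H + EV), e^{−Et}(H − EV)}, the operator identity [∂_t + X, Z] = 0 holds. Consequently, if f solves the transport equation ∂_t f + Xf = 0, then Zf also solves it. -/

import Mathlib

open Real ContinuousLinearMap

private theorem vlasov_transport_key {M : Type*} [NormedAddCommGroup M] [NormedSpace ℝ M]
    (X : M → M) (hXd : Differentiable ℝ X)
    (Z : ℝ → M → M) (hZj : Differentiable ℝ (fun p : ℝ × M => Z p.1 p.2))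
    (hcomm : ∀ t x, deriv (fun s => Z s x) t
        + (fderiv ℝ (Z t) x (X x) - fderiv ℝ X x (Z t x)) = 0)
    (f : ℝ → M → ℝ) (hf : ContDiff ℝ 2 (fun p : ℝ × M => f p.1 p.2))
    (htr : ∀ t x, deriv (fun s => f s x) t + fderiv ℝ (f t) x (X x) = 0) :
    ∀ t x, deriv (fun s => fderiv ℝ (f s) x (Z s x)) t
        + fderiv ℝ (fun y => fderiv ℝ (f t) y (Z t y)) x (X x) = 0 := by
  intro t x
  set g : ℝ × M → ℝ := fun p => f p.1 p.2 with hgdef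
  have hgd : Differentiable ℝ g := hf.differentiable (by norm_num)
  set h : ℝ × M → (ℝ × M →L[ℝ] ℝ) := fderiv ℝ g with hhdef
  have hhc : ContDiff ℝ 1 h := hf.fderiv_right (le_refl 2)
  have hhd : Differentiable ℝ h := hhc.differentiable (by norm_num)
  -- partial derivatives of f in terms of h
  have hA : ∀ (s : ℝ) (y : M), HasFDerivAt (f s) ((h (s, y)).comp (inr ℝ ℝ M)) y := fun s y =>
    (hgd (s, y)).hasFDerivAt.comp y (hasFDerivAt_prodMk_right s y)
  have hT : ∀ (s : ℝ) (y : M), HasDerivAt (fun s' => f s' y) (h (s, y) (1, 0)) s := fun s y =>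
    by have := (hgd (s, y)).hasFDerivAt.comp_hasDerivAt s ((hasDerivAt_id s).prodMk (hasDerivAt_const s y)); exact this
  have htr' : ∀ q : ℝ × M, h q (1, X q.2) = 0 := by
    intro q
    have h1 := htr q.1 q.2
    rw [(hT q.1 q.2).deriv, (hA q.1 q.2).fderiv] at h1
    have h2 : ((1 : ℝ), X q.2) = ((1 : ℝ), (0 : M)) + ((0 : ℝ), X q.2) := by simp
    rw [h2, map_add]
    simpa using h1
  -- derivatives of Z
  set DZ := fderiv ℝ (fun p : ℝ × M => Z p.1 p.2) (t, x) with hDZ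
  have hZA : HasFDerivAt (Z t) (DZ.comp (inr ℝ ℝ M)) x :=
    (hZj (t, x)).hasFDerivAt.comp x (hasFDerivAt_prodMk_right t x)
  have hZT : HasDerivAt (fun s => Z s x) (DZ (1, 0)) t :=
    by have := (hZj (t, x)).hasFDerivAt.comp_hasDerivAt t ((hasDerivAt_id t).prodMk (hasDerivAt_const t x)); exact this
  -- the function F
  set W : ℝ × M → ℝ × M := fun q => ((0 : ℝ), Z q.1 q.2) with hWdef
  have hWd : HasFDerivAt W (((0 : ℝ × M →L[ℝ] ℝ)).prod DZ) (t, x) :=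
    (hasFDerivAt_const (0 : ℝ) (t, x)).prodMk (hZj (t, x)).hasFDerivAt
  set F : ℝ × M → ℝ := fun q => h q (W q) with hFdef
  set F' : ℝ × M →L[ℝ] ℝ :=
    (h (t, x)).comp (((0 : ℝ × M →L[ℝ] ℝ)).prod DZ) + (fderiv ℝ h (t, x)).flip (W (t, x))
    with hF'def
  have hFd : HasFDerivAt F F' (t, x) := (hhd (t, x)).hasFDerivAt.clm_apply hWd
  -- rewrite the goal through F
  have e1 : (fun s => fderiv ℝ (f s) x (Z s x)) = fun s => F (s, x) := by
    funext s
    rw [(hA s x).fderiv]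
    simp [F, W, h]
  have e2 : (fun y => fderiv ℝ (f t) y (Z t y)) = fun y => F (t, y) := by
    funext y
    rw [(hA t y).fderiv]
    simp [F, W, h]
  rw [e1, e2]
  have d1 : deriv (fun s => F (s, x)) t = F' (1, 0) :=
    by have := hFd.comp_hasDerivAt t ((hasDerivAt_id t).prodMk (hasDerivAt_const t x)); exact this.deriv
  have d2c : HasFDerivAt (fun y => F (t, y)) (F'.comp (inr ℝ ℝ M)) x :=
    hFd.comp x (hasFDerivAt_prodMk_right t x)
  have d2 : fderiv ℝ (fun y => F (t, y)) x (X x) = F' (0, X x) := by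
    rw [d2c.fderiv]
    simp
  rw [d1, d2, ← map_add]
  have h3 : ((1 : ℝ), (0 : M)) + ((0 : ℝ), X x) = ((1 : ℝ), X x) := by simp
  rw [h3]
  -- symmetry of second derivative
  have hsym : IsSymmSndFDerivAt ℝ g (t, x) := hf.contDiffAt.isSymmSndFDerivAt (by simp)
  -- differentiate the transport equation in spatial direction
  set G : ℝ × M → ℝ := fun q => h q ((1 : ℝ), X q.2) with hGdef
  have hGd : HasFDerivAt G
      ((h (t, x)).comp (((0 : ℝ × M →L[ℝ] ℝ)).prod ((fderiv ℝ X x).comp (snd ℝ ℝ M)))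
        + (fderiv ℝ h (t, x)).flip ((1 : ℝ), X x)) (t, x) :=
    (hhd (t, x)).hasFDerivAt.clm_apply
      ((hasFDerivAt_const (1 : ℝ) (t, x)).prodMk ((hXd x).hasFDerivAt.comp (t, x) hasFDerivAt_snd))
  have hG0 : G = fun _ => (0 : ℝ) := funext fun q => htr' q
  have hGz : (h (t, x)).comp (((0 : ℝ × M →L[ℝ] ℝ)).prod ((fderiv ℝ X x).comp (snd ℝ ℝ M)))
      + (fderiv ℝ h (t, x)).flip ((1 : ℝ), X x) = 0 := by
    rw [← hGd.fderiv, hG0]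
    simp
  have key1 : h (t, x) ((0 : ℝ), fderiv ℝ X x (Z t x))
      + fderiv ℝ h (t, x) ((0 : ℝ), Z t x) ((1 : ℝ), X x) = 0 := by
    have h4 := congrArg (fun L : (ℝ × M) →L[ℝ] ℝ => L ((0 : ℝ), Z t x)) hGz
    simpa [hsym.eq ((0 : ℝ), Z t x) ((1 : ℝ), X x)] using h4
  -- compute F' (1, X x)
  have h5 : F' ((1 : ℝ), X x)
      = h (t, x) ((0 : ℝ), DZ ((1 : ℝ), X x))
        + fderiv ℝ h (t, x) ((1 : ℝ), X x) ((0 : ℝ), Z t x) := by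
    simp [F', W]
  rw [h5, hsym.eq ((1 : ℝ), X x) ((0 : ℝ), Z t x)]
  have h6 : fderiv ℝ h (t, x) ((0 : ℝ), Z t x) ((1 : ℝ), X x)
      = - h (t, x) ((0 : ℝ), fderiv ℝ X x (Z t x)) := by linarith [key1]
  rw [h6]
  have hc := hcomm t x
  rw [hZT.deriv, hZA.fderiv] at hc
  have h7 : DZ ((1 : ℝ), X x) = DZ ((1 : ℝ), (0 : M)) + DZ ((0 : ℝ), X x) := by
    rw [← map_add]; simp
  have h8 : DZ.comp (inr ℝ ℝ M) (X x) = DZ ((0 : ℝ), X x) := by simp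
  rw [h8] at hc
  have h9 : h (t, x) ((0 : ℝ), DZ ((1 : ℝ), X x)) - h (t, x) ((0 : ℝ), fderiv ℝ X x (Z t x))
      = h (t, x) ((0 : ℝ), DZ ((1 : ℝ), X x) - fderiv ℝ X x (Z t x)) := by
    rw [← map_sub]
    congr 1
    simp
  have h10 : DZ ((1 : ℝ), X x) - fderiv ℝ X x (Z t x) = 0 := by
    rw [h7]
    have := hc
    abel_nf
    abel_nf at this
    linear_combination (norm := abel) this
  rw [sub_eq_add_neg] at h9
  rw [h9, h10]
  exact (h (t, x)).map_zero

/-- Abstract commuting vector fields for the Vlasov equation on hyperbolic space: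
if `[X,Y] = -X`, `[X,H] = -E² V`, `[X,V] = -H` and `XE = 0`, then each of the
time-dependent fields `X`, `tX + Y`, `e^{Et}(H + EV)`, `e^{-Et}(H - EV)` satisfies the
operator identity `[∂ₜ + X, Z] = 0`, and consequently applying `Z` to a solution of the
transport equation `∂ₜ f + Xf = 0` yields another solution. -/
theorem stmt11 {M : Type*} [NormedAddCommGroup M] [NormedSpace ℝ M]
    (X Y H V : M → M) (E : M → ℝ)
    (hXs : ContDiff ℝ 2 X) (hYs : ContDiff ℝ 2 Y) (hHs : ContDiff ℝ 2 H)
    (hVs : ContDiff ℝ 2 V) (hEs : ContDiff ℝ 2 E)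
    (hEpos : ∀ x, 0 < E x)
    (hXE : ∀ x, fderiv ℝ E x (X x) = 0)
    (hXY : ∀ x, fderiv ℝ Y x (X x) - fderiv ℝ X x (Y x) = -X x)
    (hXH : ∀ x, fderiv ℝ H x (X x) - fderiv ℝ X x (H x) = -((E x) ^ 2) • V x)
    (hXV : ∀ x, fderiv ℝ V x (X x) - fderiv ℝ X x (V x) = -H x)
    (Z : ℝ → M → M)
    (hZ : Z = (fun _ x => X x) ∨ Z = (fun t x => t • X x + Y x) ∨
          Z = (fun t x => Real.exp (E x * t) • (H x + E x • V x)) ∨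
          Z = (fun t x => Real.exp (-(E x * t)) • (H x - E x • V x))) :
    (∀ t x, deriv (fun s => Z s x) t
        + (fderiv ℝ (Z t) x (X x) - fderiv ℝ X x (Z t x)) = 0) ∧
    ∀ f : ℝ → M → ℝ, ContDiff ℝ 2 (fun p : ℝ × M => f p.1 p.2) →
      (∀ t x, deriv (fun s => f s x) t + fderiv ℝ (f t) x (X x) = 0) →
      (∀ t x, deriv (fun s => fderiv ℝ (f s) x (Z s x)) t
          + fderiv ℝ (fun y => fderiv ℝ (f t) y (Z t y)) x (X x) = 0) := by
  have hXd : Differentiable ℝ X := hXs.differentiable (by norm_num)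
  have hYd : Differentiable ℝ Y := hYs.differentiable (by norm_num)
  have hHd : Differentiable ℝ H := hHs.differentiable (by norm_num)
  have hVd : Differentiable ℝ V := hVs.differentiable (by norm_num)
  have hEd : Differentiable ℝ E := hEs.differentiable (by norm_num)
  rcases hZ with rfl | rfl | rfl | rfl
  · -- Z = X
    have hcomm : ∀ (t : ℝ) (x : M), deriv (fun _ : ℝ => X x) t
        + (fderiv ℝ (fun y => X y) x (X x) - fderiv ℝ X x (X x)) = 0 := by
      intro t x
      simp [deriv_const]
    have hZj : Differentiable ℝ (fun p : ℝ × M => X p.2) :=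
      hXd.comp differentiable_snd
    exact ⟨hcomm, fun f hf htr => vlasov_transport_key X hXd _ hZj hcomm f hf htr⟩
  · -- Z = tX + Y
    have hcomm : ∀ (t : ℝ) (x : M), deriv (fun s : ℝ => s • X x + Y x) t
        + (fderiv ℝ (fun y => t • X y + Y y) x (X x) - fderiv ℝ X x (t • X x + Y x)) = 0 := by
      intro t x
      have hd : HasDerivAt (fun s : ℝ => s • X x + Y x) (X x) t := by
        simpa using ((hasDerivAt_id t).smul_const (X x)).add_const (Y x)
      have hfd : HasFDerivAt (fun y => t • X y + Y y) (t • fderiv ℝ X x + fderiv ℝ Y x) x :=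
        ((hXd x).hasFDerivAt.const_smul t).add (hYd x).hasFDerivAt
      rw [hd.deriv, hfd.fderiv, map_add, map_smul]
      simp only [ContinuousLinearMap.add_apply, ContinuousLinearMap.smul_apply]
      have h4 : X x + (t • fderiv ℝ X x (X x) + fderiv ℝ Y x (X x)
          - (t • fderiv ℝ X x (X x) + fderiv ℝ X x (Y x)))
          = X x + (fderiv ℝ Y x (X x) - fderiv ℝ X x (Y x)) := by abel
      rw [h4, hXY x]
      simp
    have hZj : Differentiable ℝ (fun p : ℝ × M => p.1 • X p.2 + Y p.2) :=
      (differentiable_fst.smul (hXd.comp differentiable_snd)).add (hYd.comp differentiable_snd)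
    exact ⟨hcomm, fun f hf htr => vlasov_transport_key X hXd _ hZj hcomm f hf htr⟩
  · -- Z = e^{Et}(H + EV)
    have hcomm : ∀ (t : ℝ) (x : M), deriv (fun s : ℝ => Real.exp (E x * s) • (H x + E x • V x)) t
        + (fderiv ℝ (fun y => Real.exp (E y * t) • (H y + E y • V y)) x (X x)
          - fderiv ℝ X x (Real.exp (E x * t) • (H x + E x • V x))) = 0 := by
      intro t x
      have h1 : HasDerivAt (fun s : ℝ => E x * s) (E x) t := by
        simpa using (hasDerivAt_id t).const_mul (E x)
      have hd : HasDerivAt (fun s : ℝ => Real.exp (E x * s) • (H x + E x • V x))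
          ((Real.exp (E x * t) * E x) • (H x + E x • V x)) t := h1.exp.smul_const _
      have h2 : HasFDerivAt (fun y => E y * t) (t • fderiv ℝ E x) x := by
        simpa [mul_comm] using (hEd x).hasFDerivAt.mul_const t
      have hE' : HasFDerivAt (fun y => Real.exp (E y * t))
          (Real.exp (E x * t) • (t • fderiv ℝ E x)) x := h2.exp
      have hψ : HasFDerivAt (fun y => H y + E y • V y)
          (fderiv ℝ H x + (E x • fderiv ℝ V x + (fderiv ℝ E x).smulRight (V x))) x :=
        (hHd x).hasFDerivAt.add ((hEd x).hasFDerivAt.smul (hVd x).hasFDerivAt)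
      have hfd : HasFDerivAt (fun y => Real.exp (E y * t) • (H y + E y • V y)) _ x := hE'.smul hψ
      rw [hd.deriv, hfd.fderiv, map_smul, map_add, map_smul]
      simp only [ContinuousLinearMap.add_apply, ContinuousLinearMap.smul_apply,
        ContinuousLinearMap.smulRight_apply, hXE x, smul_eq_mul, mul_zero, zero_smul, add_zero,
        zero_mul, smul_zero]
      have ha : fderiv ℝ H x (X x) = fderiv ℝ X x (H x) + (-((E x) ^ 2) • V x) := by
        rw [← hXH x]; abel
      have hb : fderiv ℝ V x (X x) = fderiv ℝ X x (V x) + (-H x) := by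
        rw [← hXV x]; abel
      rw [ha, hb]
      module
    have hZj : Differentiable ℝ
        (fun p : ℝ × M => Real.exp (E p.2 * p.1) • (H p.2 + E p.2 • V p.2)) := by
      have hexp : Differentiable ℝ (fun p : ℝ × M => Real.exp (E p.2 * p.1)) :=
        (Real.differentiable_exp).comp ((hEd.comp differentiable_snd).mul differentiable_fst)
      exact hexp.smul ((hHd.comp differentiable_snd).add
        ((hEd.comp differentiable_snd).smul (hVd.comp differentiable_snd)))
    exact ⟨hcomm, fun f hf htr => vlasov_transport_key X hXd _ hZj hcomm f hf htr⟩
  · -- Z = e^{-Et}(H - EV)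
    have hcomm : ∀ (t : ℝ) (x : M),
        deriv (fun s : ℝ => Real.exp (-(E x * s)) • (H x - E x • V x)) t
        + (fderiv ℝ (fun y => Real.exp (-(E y * t)) • (H y - E y • V y)) x (X x)
          - fderiv ℝ X x (Real.exp (-(E x * t)) • (H x - E x • V x))) = 0 := by
      intro t x
      have h1 : HasDerivAt (fun s : ℝ => -(E x * s)) (-E x) t := by
        have := ((hasDerivAt_id t).const_mul (E x)).neg
        simp only [id_eq, mul_one] at this
        exact this
      have hd : HasDerivAt (fun s : ℝ => Real.exp (-(E x * s)) • (H x - E x • V x))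
          ((Real.exp (-(E x * t)) * -E x) • (H x - E x • V x)) t := h1.exp.smul_const _
      have h2 : HasFDerivAt (fun y => -(E y * t)) (-(t • fderiv ℝ E x)) x := by
        exact ((hEd x).hasFDerivAt.mul_const t).neg
      have hE' : HasFDerivAt (fun y => Real.exp (-(E y * t)))
          (Real.exp (-(E x * t)) • -(t • fderiv ℝ E x)) x := h2.exp
      have hψ : HasFDerivAt (fun y => H y - E y • V y)
          (fderiv ℝ H x - (E x • fderiv ℝ V x + (fderiv ℝ E x).smulRight (V x))) x :=
        (hHd x).hasFDerivAt.sub ((hEd x).hasFDerivAt.smul (hVd x).hasFDerivAt)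
      have hfd : HasFDerivAt (fun y => Real.exp (-(E y * t)) • (H y - E y • V y)) _ x := hE'.smul hψ
      rw [hd.deriv, hfd.fderiv, map_smul, map_sub, map_smul]
      simp only [ContinuousLinearMap.add_apply, ContinuousLinearMap.sub_apply,
        ContinuousLinearMap.smul_apply, ContinuousLinearMap.neg_apply,
        ContinuousLinearMap.smulRight_apply, hXE x, smul_eq_mul, mul_zero, zero_smul, add_zero,
        sub_zero, zero_mul, smul_zero, neg_zero]
      have ha : fderiv ℝ H x (X x) = fderiv ℝ X x (H x) + (-((E x) ^ 2) • V x) := by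
        rw [← hXH x]; abel
      have hb : fderiv ℝ V x (X x) = fderiv ℝ X x (V x) + (-H x) := by
        rw [← hXV x]; abel
      rw [ha, hb]
      module
    have hZj : Differentiable ℝ
        (fun p : ℝ × M => Real.exp (-(E p.2 * p.1)) • (H p.2 - E p.2 • V p.2)) := by
      have hexp : Differentiable ℝ (fun p : ℝ × M => Real.exp (-(E p.2 * p.1))) :=
        (Real.differentiable_exp).comp ((hEd.comp differentiable_snd).mul differentiable_fst).neg
      exact hexp.smul ((hHd.comp differentiable_snd).sub
        ((hEd.comp differentiable_snd).smul (hVd.comp differentiable_snd)))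
    exact ⟨hcomm, fun f hf htr => vlasov_transport_key X hXd _ hZj hcomm f hf htr⟩
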